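/- For integers 1 ≤ i ≤ n, the sum over all tuples (n_1, ..., n_i, m) with n_j ≥ 1 integers, m ≥ 0 an integer, and n_1 + ... + n_i + m = n, of (∏_{j=1}^{i} n_j^(n_j-1)/n_j!) · m^m/m! equals n^(n-i)/(n-i)!, with the convention 0^0 = 1. -/

import Mathlib

open Finset Polynomial

lemma fwd_pow_zero : ∀ j M : ℕ, j < M → (fwdDiff (1:ℕ))^[M] (fun x : ℕ => (x:ℚ)^j) = 0 := by
  intro j
  induction j using Nat.strong_induction_on with
  | _ j IH =>
    intro M hM
    obtain ⟨M, rfl⟩ : ∃ M', M = M' + 1 := ⟨M - 1, by omega⟩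
    have h1 : fwdDiff (1:ℕ) (fun x : ℕ => (x:ℚ)^j)
        = ∑ t ∈ Finset.range j, (fun x : ℕ => (j.choose t : ℚ) * (x:ℚ)^t) := by
      funext x
      simp only [fwdDiff, Finset.sum_apply]
      push_cast
      rw [add_pow]
      rw [Finset.sum_range_succ]
      simp [mul_comm]
    rw [Function.iterate_succ_apply, h1, fwdDiff_iter_finset_sum]
    apply Finset.sum_eq_zero
    intro t ht
    have htj := Finset.mem_range.1 ht
    have : (fun x : ℕ => (j.choose t : ℚ) * (x:ℚ)^t)
        = (j.choose t : ℚ) • (fun x : ℕ => (x:ℚ)^t) := by funext x; simp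
    rw [this, fwdDiff_iter_const_smul, IH t htj M (by omega)]
    simp

lemma altsum (M j : ℕ) (h : j < M) :
    ∑ k ∈ Finset.range (M+1), ((-1:ℚ))^(M-k) * (M.choose k) * (k:ℚ)^j = 0 := by
  have H := fwdDiff_iter_eq_sum_shift (h := (1:ℕ)) (fun x : ℕ => (x:ℚ)^j) M 0
  rw [fwd_pow_zero j M h] at H
  refine Eq.trans (Finset.sum_congr rfl ?_) H.symm
  intro k _
  simp only [zsmul_eq_mul, smul_eq_mul, Nat.zero_add, mul_one]
  push_cast
  ring

lemma abel_poly : ∀ N : ℕ, 1 ≤ N → ∀ a : ℚ,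
    ∑ k ∈ Finset.Icc 1 N,
      C ((N.choose k : ℚ) * (k:ℚ)^(k-1)) * (X + C (a + ((N-k : ℕ) : ℚ)))^(N-k)
    = C ((N:ℚ)) * (X + C (a + (N:ℚ)))^(N-1) := by
  intro N
  induction N with
  | zero => omega
  | succ N IH =>
    intro _ a
    rcases Nat.eq_zero_or_pos N with rfl | hN1
    · simp
    -- derivative of LHS equals C (N+1) * (IH sum at a+1)
    have h2 : derivative (∑ k ∈ Finset.Icc 1 (N+1),
          C (((N+1).choose k : ℚ) * (k:ℚ)^(k-1)) * (X + C (a + ((N+1-k : ℕ) : ℚ)))^(N+1-k))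
        = C ((N+1:ℕ):ℚ) * ∑ k ∈ Finset.Icc 1 N,
          C ((N.choose k : ℚ) * (k:ℚ)^(k-1)) * (X + C ((a+1) + ((N-k : ℕ) : ℚ)))^(N-k) := by
      rw [derivative_sum, Finset.sum_Icc_succ_top (by omega), Finset.mul_sum]
      have hlast : derivative
          (C (((N+1).choose (N+1) : ℚ) * ((N+1:ℕ):ℚ)^(N+1-1)) *
            (X + C (a + ((N+1-(N+1) : ℕ) : ℚ)))^(N+1-(N+1))) = 0 := by
        rw [Nat.sub_self, pow_zero, mul_one, derivative_C]
      rw [hlast, add_zero]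
      refine Finset.sum_congr rfl ?_
      intro k hk
      obtain ⟨hk1, hk2⟩ := Finset.mem_Icc.mp hk
      rw [derivative_C_mul, derivative_pow, derivative_X_add_C, mul_one]
      have e1 : N + 1 - k - 1 = N - k := by omega
      have e2 : (N + 1 - k : ℕ) = (N - k) + 1 := by omega
      rw [e1, e2]
      push_cast
      rw [show a + (((N - k : ℕ):ℚ) + 1) = (a + 1) + ((N - k : ℕ):ℚ) by ring]
      rw [← mul_assoc, ← C_mul, ← mul_assoc, ← C_mul]
      congr 1
      rw [C_inj]
      have hch : ((N.choose k : ℚ)) * ((N:ℚ)+1) = (((N+1).choose k : ℚ)) * (((N+1-k : ℕ)):ℚ) := by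
        exact_mod_cast congrArg (fun x : ℕ => (x:ℚ)) (Nat.choose_mul_succ_eq N k)
      rw [e2] at hch
      push_cast at hch
      linear_combination (-(k:ℚ)^(k-1)) * hch
    rw [IH hN1 (a+1)] at h2
    -- derivative of RHS
    have h3 : derivative (C (((N+1:ℕ)):ℚ) * (X + C (a + ((N+1:ℕ):ℚ)))^(N+1-1))
        = C ((N+1:ℕ):ℚ) * (C ((N:ℚ)) * (X + C ((a+1) + (N:ℚ)))^(N-1)) := by
      rw [derivative_C_mul, derivative_pow, derivative_X_add_C, mul_one]
      simp only [Nat.add_sub_cancel]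
      rw [show a + ((N+1:ℕ):ℚ) = (a+1) + (N:ℚ) by push_cast; ring]
    set L := ∑ k ∈ Finset.Icc 1 (N+1),
      C (((N+1).choose k : ℚ) * (k:ℚ)^(k-1)) * (X + C (a + ((N+1-k : ℕ) : ℚ)))^(N+1-k) with hL
    set R := C (((N+1:ℕ)):ℚ) * (X + C (a + ((N+1:ℕ):ℚ)))^(N+1-1) with hR
    have hD : derivative (L - R) = 0 := by
      rw [derivative_sub, h2, h3, sub_self]
    have hConst : L - R = C ((L - R).coeff 0) := eq_C_of_derivative_eq_zero hD
    -- evaluate at y0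
    set y0 : ℚ := -(a + ((N+1:ℕ):ℚ)) with hy0
    have hevalR : eval y0 R = 0 := by
      rw [hR]
      simp only [eval_mul, eval_pow, eval_add, eval_X, eval_C]
      rw [hy0]
      rw [show -(a + ((N+1:ℕ):ℚ)) + (a + ((N+1:ℕ):ℚ)) = 0 by ring]
      rw [zero_pow (by omega : N+1-1 ≠ 0)]
      ring
    have hevalL : eval y0 L = 0 := by
      rw [hL]
      rw [eval_finset_sum]
      have hterm : ∀ k ∈ Finset.Icc 1 (N+1),
          eval y0 (C (((N+1).choose k : ℚ) * (k:ℚ)^(k-1)) * (X + C (a + ((N+1-k : ℕ) : ℚ)))^(N+1-k))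
          = ((-1:ℚ))^(N+1-k) * ((N+1).choose k) * (k:ℚ)^N := by
        intro k hk
        obtain ⟨hk1, hk2⟩ := Finset.mem_Icc.mp hk
        simp only [eval_mul, eval_pow, eval_add, eval_X, eval_C, hy0]
        have : -(a + ((N+1:ℕ):ℚ)) + (a + ((N+1-k : ℕ):ℚ)) = -(k:ℚ) := by
          rw [Nat.cast_sub (by omega)]
          push_cast; ring
        rw [this, neg_pow]
        have : (k:ℚ)^(k-1) * ((-1:ℚ)^(N+1-k) * (k:ℚ)^(N+1-k))
            = (-1:ℚ)^(N+1-k) * ((k:ℚ)^(k-1) * (k:ℚ)^(N+1-k)) := by ring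
        rw [mul_assoc, this, ← pow_add]
        have : (k - 1) + (N+1-k) = N := by omega
        rw [this]
        ring
      rw [Finset.sum_congr rfl hterm]
      have hsub : Finset.Icc 1 (N+1) ⊆ Finset.range (N+2) := by
        intro x hx
        simp only [Finset.mem_Icc] at hx
        simp only [Finset.mem_range]; omega
      rw [Finset.sum_subset hsub]
      · exact altsum (N+1) N (by omega)
      · intro x hx2 hx
        have hx0 : x = 0 := by
          simp only [Finset.mem_Icc, not_and_or, not_le] at hx
          simp only [Finset.mem_range] at hx2
          omega
        subst hx0
        simp [zero_pow (by omega : N ≠ 0)]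
    have : (L - R).coeff 0 = 0 := by
      have := congrArg (eval y0) hConst
      rw [eval_sub, hevalL, hevalR, eval_C] at this
      linarith
    rw [this] at hConst
    have : L = R := by
      have := hConst
      rw [map_zero, sub_eq_zero] at this
      exact this
    exact this

lemma abel_eval (N : ℕ) (hN : 1 ≤ N) (y : ℚ) :
    ∑ k ∈ Finset.Icc 1 N, (N.choose k : ℚ) * (k:ℚ)^(k-1) * (y + ((N-k:ℕ):ℚ))^(N-k)
    = (N:ℚ) * (y + (N:ℚ))^(N-1) := by
  have h := congrArg (eval y) (abel_poly N hN 0)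
  rw [eval_finset_sum] at h
  simp only [eval_mul, eval_pow, eval_add, eval_X, eval_C, zero_add] at h
  exact h

lemma decomp (i n : ℕ) (f g : ℕ → ℚ) :
    ∑ c ∈ (Finset.Nat.antidiagonalTuple (i + 2) n).filter
        (fun c => ∀ j : Fin (i+1), 1 ≤ c j.castSucc),
      (∏ j : Fin (i+1), f (c j.castSucc)) * g (c (Fin.last (i+1)))
    = ∑ k ∈ Finset.Icc 1 n, f k *
        ∑ c ∈ (Finset.Nat.antidiagonalTuple (i + 1) (n - k)).filter
            (fun c => ∀ j : Fin i, 1 ≤ c j.castSucc),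
          (∏ j : Fin i, f (c j.castSucc)) * g (c (Fin.last i)) := by
  simp_rw [Finset.mul_sum]
  rw [Finset.sum_sigma']
  apply Finset.sum_nbij' (fun c => (⟨c 0, Fin.tail c⟩ :
      Σ _k : ℕ, (Fin (i+1) → ℕ))) (fun p => Fin.cons p.1 p.2)
  · -- maps into sigma set
    intro c hc
    obtain ⟨hmem, hcond⟩ := Finset.mem_filter.mp hc
    rw [Finset.Nat.mem_antidiagonalTuple] at hmem
    have hsum : c 0 + ∑ j : Fin (i+1), Fin.tail c j = n := by
      rw [← hmem]
      conv_rhs => rw [Fin.sum_univ_succ]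
      rfl
    have h0 : 1 ≤ c 0 := by simpa using hcond 0
    refine Finset.mem_sigma.mpr ⟨?_, ?_⟩
    · show c 0 ∈ Finset.Icc 1 n
      exact Finset.mem_Icc.mpr ⟨h0, by omega⟩
    show Fin.tail c ∈ _
    refine Finset.mem_filter.mpr ⟨?_, ?_⟩
    · rw [Finset.Nat.mem_antidiagonalTuple]
      show ∑ j : Fin (i+1), Fin.tail c j = n - c 0
      omega
    · intro j
      have := hcond j.succ
      rwa [← Fin.succ_castSucc] at this
  · -- maps back
    intro p hp
    obtain ⟨hk, hd⟩ := Finset.mem_sigma.mp hp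
    obtain ⟨hk1, hk2⟩ := Finset.mem_Icc.mp hk
    obtain ⟨hmem, hcond⟩ := Finset.mem_filter.mp hd
    rw [Finset.Nat.mem_antidiagonalTuple] at hmem
    refine Finset.mem_filter.mpr ⟨?_, ?_⟩
    · rw [Finset.Nat.mem_antidiagonalTuple, Fin.sum_univ_succ, Fin.cons_zero]
      simp only [Fin.cons_succ]
      omega
    · intro j
      induction j using Fin.cases with
      | zero => simpa using hk1
      | succ j' =>
        rw [← Fin.succ_castSucc, Fin.cons_succ]
        exact hcond j'
  · intro c _; exact Fin.cons_self_tail c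
  · intro p _; simp
  · -- summands agree
    intro c _
    show _ = f (c 0) * _
    rw [Fin.prod_univ_succ]
    simp only [Fin.tail, Fin.castSucc_zero, Fin.succ_castSucc, Fin.succ_last, mul_assoc]


lemma key : ∀ i n : ℕ, i ≤ n →
    ∑ c ∈ (Finset.Nat.antidiagonalTuple (i + 1) n).filter
        (fun c => ∀ j : Fin i, 1 ≤ c j.castSucc),
      (∏ j : Fin i, ((c j.castSucc : ℚ) ^ (c j.castSucc - 1) / (c j.castSucc).factorial)) *
        ((c (Fin.last i) : ℚ) ^ (c (Fin.last i)) / (c (Fin.last i)).factorial)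
    = (n : ℚ) ^ (n - i) / (n - i).factorial := by
  intro i
  induction i with
  | zero =>
    intro n _
    rw [Finset.filter_true_of_mem (fun c _ => fun j : Fin 0 => j.elim0)]
    simp [Finset.Nat.antidiagonalTuple_one, Fin.last]
  | succ i IH =>
    intro n hn
    set N := n - i with hNdef
    have hN : 1 ≤ N := by omega
    refine Eq.trans (decomp i n (fun k => (k:ℚ)^(k-1)/(k.factorial:ℚ))
      (fun m => (m:ℚ)^m/(m.factorial:ℚ))) ?_
    have hsub : Finset.Icc 1 N ⊆ Finset.Icc 1 n :=
      Finset.Icc_subset_Icc_right (by omega)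
    have hzero : ∀ k ∈ Finset.Icc 1 n, k ∉ Finset.Icc 1 N →
        ((k:ℚ)^(k-1)/(k.factorial:ℚ)) *
          (∑ c ∈ (Finset.Nat.antidiagonalTuple (i + 1) (n - k)).filter
              (fun c => ∀ j : Fin i, 1 ≤ c j.castSucc),
            (∏ j : Fin i, ((c j.castSucc : ℚ) ^ (c j.castSucc - 1) / (c j.castSucc).factorial)) *
              ((c (Fin.last i) : ℚ) ^ (c (Fin.last i)) / (c (Fin.last i)).factorial)) = 0 := by
      intro k hk hk'
      rw [Finset.mem_Icc] at hk
      rw [Finset.mem_Icc, not_and_or, not_le, not_le] at hk'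
      have hempty : (Finset.Nat.antidiagonalTuple (i + 1) (n - k)).filter
          (fun c => ∀ j : Fin i, 1 ≤ c j.castSucc) = ∅ := by
        rw [Finset.filter_eq_empty_iff]
        intro c hc
        rw [Finset.Nat.mem_antidiagonalTuple] at hc
        intro hcond
        have h1 : (i:ℕ) ≤ ∑ j : Fin i, c j.castSucc := by
          calc (i:ℕ) = ∑ _j : Fin i, 1 := by simp
          _ ≤ _ := Finset.sum_le_sum fun j _ => hcond j
        have h2 : ∑ j : Fin i, c j.castSucc + c (Fin.last i) = n - k := by
          rw [← Fin.sum_univ_castSucc]; exact hc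
        omega
      rw [hempty, Finset.sum_empty, mul_zero]
    refine Eq.trans (Finset.sum_subset hsub hzero).symm ?_
    trans (∑ k ∈ Finset.Icc 1 N,
      ((N.choose k : ℚ) * (k:ℚ)^(k-1) * ((i:ℚ) + ((N-k:ℕ):ℚ))^(N-k)) / (N.factorial:ℚ))
    · refine Finset.sum_congr rfl fun k hk => ?_
      obtain ⟨hk1, hk2⟩ := Finset.mem_Icc.mp hk
      show ((k:ℚ)^(k-1)/(k.factorial:ℚ)) * _
        = ((N.choose k : ℚ) * (k:ℚ)^(k-1) * ((i:ℚ) + ((N-k:ℕ):ℚ))^(N-k)) / (N.factorial:ℚ)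
      rw [IH (n - k) (by omega)]
      have he : n - k - i = N - k := by omega
      have hbase : ((n - k:ℕ):ℚ) = (i:ℚ) + ((N-k:ℕ):ℚ) := by
        have : n - k = i + (N - k) := by omega
        rw [this]; push_cast; ring
      rw [he, hbase]
      have hch : (N.choose k : ℚ) * (k.factorial:ℚ) * ((N-k).factorial:ℚ)
          = (N.factorial:ℚ) := by
        exact_mod_cast congrArg (fun x : ℕ => (x:ℚ))
          (Nat.choose_mul_factorial_mul_factorial hk2)
      field_simp
      rw [← hch]
      ring
    · rw [← Finset.sum_div, abel_eval N hN (i:ℚ)]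
      have h1 : n - (i+1) = N - 1 := by omega
      have h2 : (i:ℚ) + (N:ℚ) = (n:ℚ) := by
        have : i + N = n := by omega
        exact_mod_cast congrArg (fun x : ℕ => (x:ℚ)) this
      rw [h1, h2, ← Nat.mul_factorial_pred (by omega : N ≠ 0)]
      push_cast
      have hN0 : (N:ℚ) ≠ 0 := Nat.cast_ne_zero.mpr (by omega)
      have hf0 : ((N-1).factorial:ℚ) ≠ 0 := Nat.cast_ne_zero.mpr (N-1).factorial_ne_zero
      field_simp



/-- Lemma "dominantB": for `1 ≤ i ≤ n`, the sum over tuples `(n_1,…,n_i,m)` with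
`n_j ≥ 1`, `m ≥ 0`, `n_1+⋯+n_i+m = n`, of `(∏_j n_j^(n_j-1)/n_j!)·m^m/m!`
equals `n^(n-i)/(n-i)!` (with the convention `0^0 = 1`). -/
theorem stmt3 (i n : ℕ) (hi : 1 ≤ i) (hin : i ≤ n) :
    ∑ c ∈ (Finset.Nat.antidiagonalTuple (i + 1) n).filter
        (fun c => ∀ j : Fin i, 1 ≤ c j.castSucc),
      (∏ j : Fin i, ((c j.castSucc : ℚ) ^ (c j.castSucc - 1) / (c j.castSucc).factorial)) *
        ((c (Fin.last i) : ℚ) ^ (c (Fin.last i)) / (c (Fin.last i)).factorial)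
    = (n : ℚ) ^ (n - i) / (n - i).factorial := by
  exact key i n hin
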